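/- If X ~ NB(μ, b) and X1 | X = x ~ Binomial(x, ε) with ε ∈ (0,1), then X1 ~ NB(εμ, b) marginally. -/

import Mathlib

open MeasureTheory Set

/-- The generalized binomial / negative binomial series:
`∑ⱼ Γ(j+a)/j! tʲ = (1/(1-t))^a Γ(a)` for `a > 0` and `0 ≤ t < 1`. -/
lemma gamma_series {a t : ℝ} (ha : 0 < a) (ht0 : 0 ≤ t) (ht1 : t < 1) :
    ∑' j : ℕ, Real.Gamma ((j : ℝ) + a) / (Nat.factorial j) * t ^ j
      = (1 / (1 - t)) ^ a * Real.Gamma a := by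
  have hr : 0 < 1 - t := by linarith
  set R : ℝ := (1 / (1 - t)) ^ a * Real.Gamma a with hR
  have hRpos : 0 < R := by
    have := Real.Gamma_pos_of_pos ha
    positivity
  set g : ℕ → ℝ → ℝ :=
    fun j x => Real.exp (-x) * x ^ ((j : ℝ) + a - 1) * (t ^ j / (Nat.factorial j)) with hg
  have hja : ∀ j : ℕ, (0 : ℝ) < (j : ℝ) + a := fun j => by positivity
  have hgint : ∀ j : ℕ, IntegrableOn (g j) (Ioi 0) := fun j =>
    (Real.GammaIntegral_convergent (hja j)).mul_const _
  have hgnn : ∀ j : ℕ, 0 ≤ᵐ[volume.restrict (Ioi 0)] g j := by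
    intro j
    filter_upwards [ae_restrict_mem measurableSet_Ioi] with x hx
    have hx0 : (0 : ℝ) < x := hx
    have h1 : (0 : ℝ) ≤ Real.exp (-x) := (Real.exp_pos _).le
    have h2 : (0 : ℝ) ≤ x ^ ((j : ℝ) + a - 1) := Real.rpow_nonneg hx0.le _
    have h3 : (0 : ℝ) ≤ t ^ j / (Nat.factorial j) := by positivity
    exact mul_nonneg (mul_nonneg h1 h2) h3
  have hterm : ∀ j : ℕ, ∫ x in Ioi 0, g j x
      = Real.Gamma ((j : ℝ) + a) / (Nat.factorial j) * t ^ j := by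
    intro j
    rw [hg]
    simp only
    rw [MeasureTheory.integral_mul_const, ← Real.Gamma_eq_integral (hja j)]
    ring
  -- the target function
  set f : ℝ → ℝ := fun x => x ^ (a - 1) * Real.exp (-((1 - t) * x)) with hf
  have hfmeas : AEStronglyMeasurable f (volume.restrict (Ioi 0)) := by
    refine ContinuousOn.aestronglyMeasurable ?_ measurableSet_Ioi
    exact (continuousOn_id.rpow_const (fun x hx => Or.inl (ne_of_gt hx))).mul
      (((continuous_const.mul continuous_id).neg.rexp).continuousOn)
  have hfnn : 0 ≤ᵐ[volume.restrict (Ioi 0)] f := by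
    filter_upwards [ae_restrict_mem measurableSet_Ioi] with x hx
    have hx0 : (0 : ℝ) < x := hx
    exact mul_nonneg (Real.rpow_nonneg hx0.le _) (Real.exp_pos _).le
  have hfint : ∫ x in Ioi 0, f x = R := by
    rw [hf, hR]
    exact Real.integral_rpow_mul_exp_neg_mul_Ioi ha hr
  -- key computation in ℝ≥0∞
  have key : ∑' j : ℕ, ENNReal.ofReal (Real.Gamma ((j : ℝ) + a) / (Nat.factorial j) * t ^ j)
      = ENNReal.ofReal R := by
    have h1 : ∀ j : ℕ, ENNReal.ofReal (Real.Gamma ((j : ℝ) + a) / (Nat.factorial j) * t ^ j)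
        = ∫⁻ x in Ioi 0, ENNReal.ofReal (g j x) := by
      intro j
      rw [← hterm j, ofReal_integral_eq_lintegral_ofReal (hgint j) (hgnn j)]
    simp_rw [h1]
    rw [← lintegral_tsum (fun j => ((hgint j).aemeasurable.ennreal_ofReal))]
    have h2 : ∀ x ∈ Ioi (0 : ℝ), ∑' j : ℕ, ENNReal.ofReal (g j x) = ENNReal.ofReal (f x) := by
      intro x hx
      have hx0 : (0 : ℝ) < x := hx
      have hsummable : Summable (fun j : ℕ => (t * x) ^ j / (Nat.factorial j)) :=
        Real.summable_pow_div_factorial (t * x)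
      have hgx : ∀ j : ℕ, g j x
          = Real.exp (-x) * x ^ (a - 1) * ((t * x) ^ j / (Nat.factorial j)) := by
        intro j
        have : x ^ ((j : ℝ) + a - 1) = x ^ (j : ℕ) * x ^ (a - 1) := by
          rw [show (j : ℝ) + a - 1 = (j : ℝ) + (a - 1) by ring, Real.rpow_add hx0,
            Real.rpow_natCast]
        rw [hg]
        simp only
        rw [this, mul_pow]
        field_simp
      have hsum : ∑' j : ℕ, g j x = f x := by
        simp_rw [hgx]
        rw [tsum_mul_left]
        have hexp : ∑' j : ℕ, (t * x) ^ j / (Nat.factorial j) = Real.exp (t * x) := by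
          rw [Real.exp_eq_exp_ℝ, NormedSpace.exp_eq_tsum_div]
        rw [hexp]
        have hee : Real.exp (-x) * Real.exp (t * x) = Real.exp (-((1 - t) * x)) := by
          rw [← Real.exp_add]; congr 1; ring
        show Real.exp (-x) * x ^ (a - 1) * Real.exp (t * x)
            = x ^ (a - 1) * Real.exp (-((1 - t) * x))
        rw [← hee]; ring
      rw [← hsum, ENNReal.ofReal_tsum_of_nonneg]
      · intro j
        rw [hgx j]
        positivity
      · simp_rw [hgx]
        exact hsummable.mul_left _
    rw [setLIntegral_congr_fun measurableSet_Ioi h2]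
    -- now show lintegral of f over Ioi 0 equals ofReal R
    have h3 : ∫ x in Ioi 0, f x = (∫⁻ x in Ioi 0, ENNReal.ofReal (f x)).toReal :=
      integral_eq_lintegral_of_nonneg_ae hfnn hfmeas
    have h4 : (∫⁻ x in Ioi 0, ENNReal.ofReal (f x)).toReal = R := by rw [← h3, hfint]
    have h5 : (∫⁻ x in Ioi 0, ENNReal.ofReal (f x)) ≠ ⊤ := by
      intro htop
      rw [htop] at h4
      simp at h4
      exact hRpos.ne' h4.symm
    rw [← h4, ENNReal.ofReal_toReal h5]
  -- return to ℝ
  have hnn : ∀ j : ℕ, 0 ≤ Real.Gamma ((j : ℝ) + a) / (Nat.factorial j) * t ^ j := by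
    intro j
    have := Real.Gamma_pos_of_pos (hja j)
    positivity
  calc ∑' j : ℕ, Real.Gamma ((j : ℝ) + a) / (Nat.factorial j) * t ^ j
      = ∑' j : ℕ, (ENNReal.ofReal (Real.Gamma ((j : ℝ) + a) / (Nat.factorial j) * t ^ j)).toReal := by
        congr 1; funext j; rw [ENNReal.toReal_ofReal (hnn j)]
    _ = (∑' j : ℕ, ENNReal.ofReal (Real.Gamma ((j : ℝ) + a) / (Nat.factorial j) * t ^ j)).toReal :=
        (ENNReal.tsum_toReal_eq (fun j => ENNReal.ofReal_ne_top)).symm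
    _ = (ENNReal.ofReal R).toReal := by rw [key]
    _ = R := ENNReal.toReal_ofReal hRpos.le

/-- The negative binomial pmf in the mean/overdispersion parameterization `NB(μ, b)`:
`P(X = k) = (Γ(k+b)/(Γ(b) k!)) (μ/(μ+b))^k (b/(μ+b))^b`. -/
noncomputable def nbPMF (μ b : ℝ) (k : ℕ) : ℝ :=
  Real.Gamma (k + b) / (Real.Gamma b * (Nat.factorial k)) *
    (μ / (μ + b)) ^ k * (b / (μ + b)) ^ b

/-- The binomial pmf with `n` trials and success probability `p`, evaluated at `k`. -/
noncomputable def binomPMF (n : ℕ) (p : ℝ) (k : ℕ) : ℝ :=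
  (n.choose k) * p ^ k * (1 - p) ^ (n - k)

/-- Binomial thinning of the negative binomial: if `X ~ NB(μ, b)` and
`X1 | X = x ~ Binomial(x, ε)` with `ε ∈ (0,1)`, then marginally `X1 ~ NB(εμ, b)`. -/
theorem binomial_thinning_nb (μ b ε : ℝ) (hμ : 0 < μ) (hb : 0 < b)
    (hε : ε ∈ Set.Ioo (0 : ℝ) 1) (k : ℕ) :
    (∑' x : ℕ, nbPMF μ b x * binomPMF x ε k) = nbPMF (ε * μ) b k := by
  obtain ⟨hε0, hε1⟩ := hε
  have hμb : (0 : ℝ) < μ + b := by linarith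
  have hεμb : (0 : ℝ) < ε * μ + b := by positivity
  have hΓb : 0 < Real.Gamma b := Real.Gamma_pos_of_pos hb
  set p : ℝ := μ / (μ + b) with hp
  set q : ℝ := b / (μ + b) with hq
  set s : ℝ := p * (1 - ε) with hs
  have hp0 : 0 < p := by positivity
  have hε1' : (0 : ℝ) < 1 - ε := by linarith
  have hs0 : 0 ≤ s := by positivity
  have hs1 : s < 1 := by
    rw [hs, hp]
    rw [div_mul_eq_mul_div, div_lt_one hμb]
    nlinarith
  have h1s : 1 - s = (ε * μ + b) / (μ + b) := by
    rw [hs, hp]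
    field_simp
    ring
  -- reindexing: terms with x < k vanish
  set F : ℕ → ℝ := fun x => nbPMF μ b x * binomPMF x ε k with hF
  have hreindex : ∑' x : ℕ, F x = ∑' j : ℕ, F (j + k) := by
    refine (Function.Injective.tsum_eq (g := fun j : ℕ => j + k) (add_left_injective k) ?_).symm
    intro x hx
    rcases le_or_gt k x with h | h
    · exact ⟨x - k, by show x - k + k = x; omega⟩
    · exfalso
      apply hx
      rw [hF]
      simp only [binomPMF, Nat.choose_eq_zero_of_lt h]
      simp
  -- compute each reindexed term
  have hterm : ∀ j : ℕ, F (j + k)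
      = (q ^ b * (ε * p) ^ k / (Real.Gamma b * (Nat.factorial k)))
        * (Real.Gamma ((j : ℝ) + ((k : ℝ) + b)) / (Nat.factorial j) * s ^ j) := by
    intro j
    rw [hF]
    simp only [nbPMF, binomPMF]
    rw [← hp, ← hq]
    have hchoose : ((j + k).choose k : ℝ)
        = ((j + k).factorial : ℝ) / ((Nat.factorial k : ℝ) * (Nat.factorial j : ℝ)) := by
      rw [Nat.cast_choose ℝ (by omega : k ≤ j + k), show j + k - k = j by omega]
    have hsub : j + k - k = j := by omega
    have hcast : ((j + k : ℕ) : ℝ) + b = (j : ℝ) + ((k : ℝ) + b) := by push_cast; ring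
    rw [hchoose, hsub, hcast, hs, mul_pow, pow_add, mul_pow]
    have hfacjk : ((j + k).factorial : ℝ) ≠ 0 := Nat.cast_ne_zero.mpr (Nat.factorial_ne_zero _)
    have hfack : ((Nat.factorial k : ℝ)) ≠ 0 := Nat.cast_ne_zero.mpr (Nat.factorial_ne_zero _)
    have hfacj : ((Nat.factorial j : ℝ)) ≠ 0 := Nat.cast_ne_zero.mpr (Nat.factorial_ne_zero _)
    field_simp
  rw [hreindex]
  simp_rw [hterm]
  rw [tsum_mul_left, gamma_series (by positivity) hs0 hs1]
  -- final algebra with rpow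
  have h1s' : (0 : ℝ) < 1 - s := by linarith
  have hw : 1 / (1 - s) = (μ + b) / (ε * μ + b) := by
    rw [h1s]
    rw [one_div_div]
  have hwpos : (0 : ℝ) < (μ + b) / (ε * μ + b) := by positivity
  rw [hw]
  have hsplit : ((μ + b) / (ε * μ + b)) ^ ((k : ℝ) + b)
      = ((μ + b) / (ε * μ + b)) ^ (k : ℕ) * ((μ + b) / (ε * μ + b)) ^ b := by
    rw [Real.rpow_add hwpos, Real.rpow_natCast]
  have hqb : q ^ b * ((μ + b) / (ε * μ + b)) ^ b = (b / (ε * μ + b)) ^ b := by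
    rw [hq, ← Real.mul_rpow (by positivity) hwpos.le]
    congr 1
    field_simp
  have hpk : (ε * p) ^ k * ((μ + b) / (ε * μ + b)) ^ (k : ℕ) = (ε * μ / (ε * μ + b)) ^ k := by
    rw [← mul_pow]
    congr 1
    rw [hp]
    field_simp
  rw [hsplit, nbPMF, ← hqb, ← hpk]
  ring
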